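/- arXiv:1508.01978 — 3 statements merged into one kernel-verified Lean document; each statement's English description precedes it below -/
import Mathlib

section
/- The quantum relative entropy satisfies S(ρ ‖ Λ^{Ξ}(U ρ U†)) ≥ S(ρ ‖ Λ^{Ξ}(ρ)) for every density operator ρ, every unitary U, and every orthonormal basis Ξ, where Λ^{Ξ} is the dephasing channel in basis Ξ. Equivalently, among all states diagonal in basis Ξ, the dephased state Λ^{Ξ}(ρ) is the closest to ρ in relative entropy. -/
open Matrix Kronecker BigOperators Finset
open scoped Classical ComplexOrder

noncomputable section

variable {m n q : Type*} [Fintype m] [DecidableEq m] [Fintype n] [DecidableEq n]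
  [Fintype q] [DecidableEq q]

/-- the projector `|v⟩⟨v|` onto a vector `v`. -/
def proj (v : n → ℂ) : Matrix n n ℂ := vecMulVec v (star v)

/-- an orthonormal basis of `ℂ^n`, given as a family of vectors. -/
def ONB (b : n → n → ℂ) : Prop := ∀ i j, star (b i) ⬝ᵥ b j = if i = j then (1 : ℂ) else 0

/-- the standard (computational) basis. -/
def stdB : n → n → ℂ := fun i j => if i = j then 1 else 0

/-- matrix logarithm of a Hermitian matrix, via the spectral decomposition
(with the convention `log 0 = 0`); junk value `0` on non-Hermitian matrices. -/
def mlog (A : Matrix n n ℂ) : Matrix n n ℂ :=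
  if hA : A.IsHermitian then
    (hA.eigenvectorUnitary : Matrix n n ℂ) *
      diagonal (fun i => (Real.log (hA.eigenvalues i) : ℂ)) *
      star (hA.eigenvectorUnitary : Matrix n n ℂ)
  else 0

/-- von Neumann entropy `S(ρ) = -Tr ρ log ρ` (in nats). -/
def vN (ρ : Matrix n n ℂ) : ℝ := -(ρ * mlog ρ).trace.re

/-- quantum relative entropy `S(ρ‖σ) = Tr(ρ log ρ - ρ log σ)`, which is `+∞`
unless the support of `ρ` is contained in the support of `σ`. -/
def relEnt (ρ σ : Matrix n n ℂ) : EReal :=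
  if ∀ v, σ *ᵥ v = 0 → ρ *ᵥ v = 0
  then (((ρ * (mlog ρ - mlog σ)).trace.re : ℝ) : EReal)
  else ⊤

/-- a density matrix. -/
def IsDensity (ρ : Matrix n n ℂ) : Prop := ρ.PosSemidef ∧ ρ.trace = 1

/-- the dephasing (pinching) channel in the basis `b`. -/
def dephase (b : n → n → ℂ) (ρ : Matrix n n ℂ) : Matrix n n ℂ :=
  ∑ i, proj (b i) * ρ * proj (b i)

/-- partial trace over the first factor. -/
def ptraceA (ρ : Matrix (m × n) (m × n) ℂ) : Matrix n n ℂ :=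
  Matrix.of fun j j' => ∑ i, ρ (i, j) (i, j')

/-- partial trace over the second factor. -/
def ptraceB (ρ : Matrix (m × n) (m × n) ℂ) : Matrix m m ℂ :=
  Matrix.of fun i i' => ∑ j, ρ (i, j) (i', j)

/-- the (unnormalized) steered state `⟨ξ|ρ|ξ⟩` on Bob's side, when Alice
obtains the outcome `ξ`. -/
def steer (ξ : m → ℂ) (ρ : Matrix (m × n) (m × n) ℂ) : Matrix n n ℂ :=
  Matrix.of fun j j' => ∑ i, ∑ i', star (ξ i) * ρ (i, j) (i', j') * ξ i'

/-- the probability `p^ξ = Tr[ρ (|ξ⟩⟨ξ| ⊗ I)]` of Alice's outcome `ξ`. -/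
def sprob (ξ : m → ℂ) (ρ : Matrix (m × n) (m × n) ℂ) : ℝ := (steer ξ ρ).trace.re

/-- the channel `I_A ⊗ Λ^{E_B}`: dephasing of the `B` factor in basis `b`. -/
def dephaseB (b : n → n → ℂ) (ρ : Matrix (m × n) (m × n) ℂ) : Matrix (m × n) (m × n) ℂ :=
  ∑ k, ((1 : Matrix m m ℂ) ⊗ₖ proj (b k)) * ρ * ((1 : Matrix m m ℂ) ⊗ₖ proj (b k))

/-- `b` is an orthonormal eigenbasis of `A`. -/
def IsEigenbasis (A : Matrix n n ℂ) (b : n → n → ℂ) : Prop :=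
  ONB b ∧ ∀ k, ∃ μ : ℝ, A *ᵥ b k = (μ : ℂ) • b k

/-- the `l₁`-norm of coherence of `τ` in the basis `b`. -/
def l1coh (b : n → n → ℂ) (τ : Matrix n n ℂ) : ℝ :=
  ∑ i, ∑ j, if i = j then 0 else ‖star (b i) ⬝ᵥ (τ *ᵥ b j)‖

/-- the trace norm `‖A‖₁ = Tr √(AᴴA)`. -/
def traceNorm (A : Matrix n n ℂ) : ℝ :=
  ∑ i, Real.sqrt ((Matrix.isHermitian_conjTranspose_mul_self A).eigenvalues i)

/-- the Fourier basis vectors `|ξ_k⟩ = d^{-1/2} Σ_j e^{-2πikj/d}|j⟩`. -/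
def fbasis (d : ℕ) (k : Fin d) : Fin d → ℂ := fun j =>
  (1 / Real.sqrt d) * Complex.exp (-(2 * Real.pi * Complex.I * (k : ℕ) * (j : ℕ)) / d)

section Aux

lemma proj_mulVec (v w : n → ℂ) : proj v *ᵥ w = (star v ⬝ᵥ w) • v := by
  funext j
  simp [proj, mulVec, dotProduct, vecMulVec_apply, Finset.mul_sum, mul_comm, mul_assoc,
    mul_left_comm]

lemma proj_herm (v : n → ℂ) : (proj v)ᴴ = proj v := by
  ext i j
  simp [proj, vecMulVec_apply, conjTranspose_apply, mul_comm]

lemma proj_mul_proj (u w : n → ℂ) :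
    proj u * proj w = (star u ⬝ᵥ w) • vecMulVec u (star w) := by
  ext i j
  simp [proj, Matrix.mul_apply, vecMulVec_apply, dotProduct, Finset.sum_mul, Finset.mul_sum]
  congr 1; funext k; ring

lemma sum_mulVec' (f : n → Matrix n n ℂ) (v : n → ℂ) :
    (∑ i, f i) *ᵥ v = ∑ i, f i *ᵥ v := by
  funext j
  simp [mulVec, dotProduct, Matrix.sum_apply, Finset.sum_mul]
  exact Finset.sum_comm

lemma ONB.sum_proj {b : n → n → ℂ} (hb : ONB b) : ∑ i, proj (b i) = 1 := by
  have key : (Matrix.of fun j i => b i j)ᴴ * (Matrix.of fun j i => b i j) = 1 := by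
    ext i i'
    simpa [Matrix.mul_apply, conjTranspose_apply, dotProduct, Matrix.one_apply] using hb i i'
  have key2 := mul_eq_one_comm.mp key
  ext j l
  have := congrFun (congrFun key2 j) l
  simpa [Matrix.mul_apply, conjTranspose_apply, proj, vecMulVec_apply,
    Matrix.sum_apply, Matrix.one_apply] using this

lemma ONB.sum_conj_mul {b : n → n → ℂ} (hb : ONB b) (j l : n) :
    ∑ i, b i j * star (b i l) = if j = l then 1 else 0 := by
  have h2 : (∑ i, proj (b i)) j l = (1 : Matrix n n ℂ) j l := by rw [hb.sum_proj]
  simpa [proj, vecMulVec_apply, Matrix.sum_apply, Matrix.one_apply] using h2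

lemma ONB.trace_eq {b : n → n → ℂ} (hb : ONB b) (A : Matrix n n ℂ) :
    A.trace = ∑ k, star (b k) ⬝ᵥ (A *ᵥ b k) := by
  have : ∑ k, star (b k) ⬝ᵥ (A *ᵥ b k) = ∑ k, ∑ j, ∑ l, star (b k j) * (A j l * b k l) := by
    simp [dotProduct, mulVec, Finset.mul_sum]
  rw [this, Finset.sum_comm]
  have : ∀ j, ∑ k, ∑ l, star (b k j) * (A j l * b k l)
      = ∑ l, A j l * ∑ k, b k l * star (b k j) := by
    intro j
    rw [Finset.sum_comm]
    congr 1; funext l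
    rw [Finset.mul_sum]
    congr 1; funext k; ring
  simp only [this]
  rw [Matrix.trace]
  congr 1; funext j
  rw [Finset.sum_eq_single j]
  · rw [hb.sum_conj_mul j j]; simp [Matrix.diag]
  · intro l _ hl
    rw [hb.sum_conj_mul l j]; simp [hl]
  · simp

lemma dephase_mulVec {b : n → n → ℂ} (hb : ONB b) (σ : Matrix n n ℂ) (k : n) :
    dephase b σ *ᵥ b k = (star (b k) ⬝ᵥ (σ *ᵥ b k)) • b k := by
  rw [dephase]
  rw [sum_mulVec']
  have : ∀ i, (proj (b i) * σ * proj (b i)) *ᵥ b k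
      = ((if i = k then (1:ℂ) else 0) * (star (b i) ⬝ᵥ (σ *ᵥ b i))) • b i := by
    intro i
    have inner : proj (b i) *ᵥ b k = (if i = k then (1:ℂ) else 0) • b i := by
      rw [proj_mulVec, hb i k]
    rw [← Matrix.mulVec_mulVec, ← Matrix.mulVec_mulVec, inner]
    by_cases h : i = k
    · subst h
      rw [if_pos rfl, one_smul, one_mul, proj_mulVec]
    · simp [h]
  simp only [this]
  rw [Finset.sum_eq_single k] <;> simp +contextual [Finset.mem_univ]

lemma mlog_eigen {A : Matrix n n ℂ} (hA : A.IsHermitian) {v : n → ℂ} (μ : ℝ)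
    (hv : A *ᵥ v = (μ : ℂ) • v) :
    mlog A *ᵥ v = ((Real.log μ : ℝ) : ℂ) • v := by
  rw [mlog, dif_pos hA]
  set W : Matrix n n ℂ := (hA.eigenvectorUnitary : Matrix n n ℂ) with hW
  have hWs : star W * W = 1 := by
    have := hA.eigenvectorUnitary.2
    rw [Matrix.mem_unitaryGroup_iff'] at this
    simpa [hW] using this
  have hWm : W * star W = 1 := mul_eq_one_comm.mp hWs
  set w : n → ℂ := star W *ᵥ v with hw
  have hD : diagonal (RCLike.ofReal ∘ hA.eigenvalues) *ᵥ w = (μ : ℂ) • w := by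
    have h1 : A *ᵥ v = W *ᵥ (diagonal (RCLike.ofReal ∘ hA.eigenvalues) *ᵥ (star W *ᵥ v)) := by
      conv_lhs => rw [hA.spectral_theorem]
      simp [Matrix.mulVec_mulVec, Matrix.mul_assoc, hW]
    have h2 : star W *ᵥ (A *ᵥ v) = diagonal (RCLike.ofReal ∘ hA.eigenvalues) *ᵥ w := by
      rw [h1, Matrix.mulVec_mulVec, Matrix.mulVec_mulVec, hWs, Matrix.one_mul, ← hw]
    rw [← h2, hv, Matrix.mulVec_smul]
  have hDlog : diagonal (fun i => (Real.log (hA.eigenvalues i) : ℂ)) *ᵥ w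
      = ((Real.log μ : ℝ) : ℂ) • w := by
    funext i
    have hi : (hA.eigenvalues i : ℂ) * w i = (μ : ℂ) * w i := by
      have := congrFun hD i
      simpa [Matrix.mulVec_diagonal] using this
    rw [Matrix.mulVec_diagonal]
    simp only [Pi.smul_apply, smul_eq_mul]
    rcases eq_or_ne (w i) 0 with h | h
    · rw [h, mul_zero, mul_zero]
    · have he : hA.eigenvalues i = μ := by exact_mod_cast mul_right_cancel₀ h hi
      rw [he]
  calc (W * diagonal (fun i => (Real.log (hA.eigenvalues i) : ℂ)) * star W) *ᵥ v
      = W *ᵥ (diagonal (fun i => (Real.log (hA.eigenvalues i) : ℂ)) *ᵥ w) := by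
        simp [Matrix.mulVec_mulVec, Matrix.mul_assoc, hw]
    _ = ((Real.log μ : ℝ) : ℂ) • v := by
        rw [hDlog, Matrix.mulVec_smul, hw, Matrix.mulVec_mulVec, hWm, Matrix.one_mulVec]

lemma psd_diag_re {A : Matrix n n ℂ} (hA : A.PosSemidef) (v : n → ℂ) :
    star v ⬝ᵥ A *ᵥ v = (((star v ⬝ᵥ A *ᵥ v).re : ℝ) : ℂ) ∧ 0 ≤ (star v ⬝ᵥ A *ᵥ v).re := by
  have h := hA.dotProduct_mulVec_nonneg v
  obtain ⟨h1, h2⟩ := Complex.nonneg_iff.mp h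
  refine ⟨?_, h1⟩
  apply Complex.ext <;> simp [← h2]

lemma proj_mul_proj_onb {b : n → n → ℂ} (hb : ONB b) (i j : n) :
    proj (b i) * proj (b j) = if i = j then proj (b i) else 0 := by
  rw [proj_mul_proj, hb i j]
  by_cases h : i = j
  · subst h; simp [proj]
  · simp [h]

lemma posSemidef_sum {ι : Type*} (s : Finset ι) (f : ι → Matrix n n ℂ)
    (h : ∀ i ∈ s, (f i).PosSemidef) : (∑ i ∈ s, f i).PosSemidef := by
  classical
  induction s using Finset.induction_on with
  | empty => simpa using Matrix.PosSemidef.zero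
  | insert a t hni ih =>
    rw [Finset.sum_insert hni]
    exact (h a (Finset.mem_insert_self a t)).add
      (ih fun i hi => h i (Finset.mem_insert_of_mem hi))

lemma dephase_posSemidef {b : n → n → ℂ} {ρ : Matrix n n ℂ} (hρ : ρ.PosSemidef) :
    (dephase b ρ).PosSemidef := by
  apply _root_.posSemidef_sum
  intro i _
  have := hρ.conjTranspose_mul_mul_same (proj (b i))
  rwa [proj_herm] at this

lemma dephase_trace {b : n → n → ℂ} (hb : ONB b) (τ : Matrix n n ℂ) :
    (dephase b τ).trace = τ.trace := by
  rw [dephase, Matrix.trace_sum]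
  have : ∀ i, (proj (b i) * τ * proj (b i)).trace = (τ * proj (b i)).trace := by
    intro i
    rw [Matrix.trace_mul_comm, ← Matrix.mul_assoc, proj_mul_proj_onb hb i i, if_pos rfl,
      Matrix.trace_mul_comm]
  simp only [this]
  rw [← Matrix.trace_sum]
  have : ∑ i, τ * proj (b i) = τ * ∑ i, proj (b i) := by rw [Finset.mul_sum]
  rw [this, hb.sum_proj, Matrix.mul_one]

lemma dephase_idem {b : n → n → ℂ} (hb : ONB b) (τ : Matrix n n ℂ) :
    dephase b (dephase b τ) = dephase b τ := by
  unfold dephase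
  congr 1; funext i
  rw [Finset.mul_sum, Finset.sum_mul]
  rw [Finset.sum_eq_single i]
  · simp only [← Matrix.mul_assoc]
    rw [proj_mul_proj_onb hb i i, if_pos rfl, Matrix.mul_assoc (proj (b i) * τ),
      proj_mul_proj_onb hb i i, if_pos rfl]
  · intro j _ hj
    simp only [← Matrix.mul_assoc]
    rw [proj_mul_proj_onb hb i j, if_neg (fun h => hj h.symm)]
    simp
  · simp

lemma mulVec_sum' (A : Matrix n n ℂ) {ι : Type*} (s : Finset ι) (f : ι → n → ℂ) :
    A *ᵥ (∑ i ∈ s, f i) = ∑ i ∈ s, A *ᵥ f i := by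
  funext j
  simp [mulVec, dotProduct, Finset.mul_sum, Finset.sum_apply]
  exact Finset.sum_comm

lemma dephase_support {b : n → n → ℂ} (hb : ONB b) {ρ : Matrix n n ℂ} (hρ : ρ.PosSemidef) :
    ∀ v, dephase b ρ *ᵥ v = 0 → ρ *ᵥ v = 0 := by
  intro v hv
  have hterm : ∀ i, star v ⬝ᵥ (proj (b i) * ρ * proj (b i)) *ᵥ v
      = star (proj (b i) *ᵥ v) ⬝ᵥ ρ *ᵥ (proj (b i) *ᵥ v) := by
    intro i
    simp only [Matrix.star_mulVec, Matrix.dotProduct_mulVec, Matrix.vecMul_vecMul,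
      proj_herm]
  have hsum : ∑ i, star (proj (b i) *ᵥ v) ⬝ᵥ ρ *ᵥ (proj (b i) *ᵥ v) = 0 := by
    have : star v ⬝ᵥ (dephase b ρ) *ᵥ v = 0 := by rw [hv]; simp
    rw [dephase, sum_mulVec'] at this
    simp only [dotProduct, Finset.sum_apply, Finset.mul_sum] at this
    rw [Finset.sum_comm] at this
    simp only [dotProduct, mulVec] at hterm ⊢
    rw [← this]
    exact (Finset.sum_congr rfl fun i _ => (hterm i).symm)
  have hzero : ∀ i, ρ *ᵥ (proj (b i) *ᵥ v) = 0 := by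
    intro i
    have hnn : ∀ i ∈ Finset.univ (α := n),
        0 ≤ star (proj (b i) *ᵥ v) ⬝ᵥ ρ *ᵥ (proj (b i) *ᵥ v) := fun i _ => hρ.dotProduct_mulVec_nonneg _
    have := (Finset.sum_eq_zero_iff_of_nonneg hnn).mp hsum i (Finset.mem_univ i)
    exact (hρ.dotProduct_mulVec_zero_iff _).mp this
  have hv1 : v = ∑ i, proj (b i) *ᵥ v := by
    rw [← sum_mulVec', hb.sum_proj, Matrix.one_mulVec]
  calc ρ *ᵥ v = ρ *ᵥ ∑ i, proj (b i) *ᵥ v := by rw [← hv1]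
    _ = ∑ i, ρ *ᵥ (proj (b i) *ᵥ v) := mulVec_sum' _ _ _
    _ = 0 := by simp [hzero]

lemma trace_mul_eig {b : n → n → ℂ} (hb : ONB b) (ρ M : Matrix n n ℂ) (f : n → ℝ)
    (hM : ∀ k, M *ᵥ b k = ((f k : ℝ) : ℂ) • b k) :
    (ρ * M).trace = ∑ k, ((f k : ℝ) : ℂ) * (star (b k) ⬝ᵥ ρ *ᵥ b k) := by
  rw [hb.trace_eq]
  congr 1; funext k
  rw [← Matrix.mulVec_mulVec, hM k, Matrix.mulVec_smul, dotProduct_smul]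
  simp

lemma relEnt_dephase_le (ρ : Matrix n n ℂ) (hρ : IsDensity ρ) {b : n → n → ℂ} (hb : ONB b)
    (σ : Matrix n n ℂ) (hσ : IsDensity σ) (hσd : dephase b σ = σ) :
    relEnt ρ (dephase b ρ) ≤ relEnt ρ σ := by
  by_cases hs : ∀ v, σ *ᵥ v = 0 → ρ *ᵥ v = 0
  · set p : n → ℝ := fun k => (star (b k) ⬝ᵥ ρ *ᵥ b k).re with hp
    set c : n → ℝ := fun k => (star (b k) ⬝ᵥ σ *ᵥ b k).re with hc
    have hpnn : ∀ k, 0 ≤ p k := fun k => (psd_diag_re hρ.1 (b k)).2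
    have hcnn : ∀ k, 0 ≤ c k := fun k => (psd_diag_re hσ.1 (b k)).2
    have hρdot : ∀ k, star (b k) ⬝ᵥ ρ *ᵥ b k = ((p k : ℝ) : ℂ) :=
      fun k => (psd_diag_re hρ.1 (b k)).1
    have hσdot : ∀ k, star (b k) ⬝ᵥ σ *ᵥ b k = ((c k : ℝ) : ℂ) :=
      fun k => (psd_diag_re hσ.1 (b k)).1
    have hΛ_eig : ∀ k, dephase b ρ *ᵥ b k = ((p k : ℝ) : ℂ) • b k := by
      intro k; rw [dephase_mulVec hb, hρdot k]
    have hσ_eig : ∀ k, σ *ᵥ b k = ((c k : ℝ) : ℂ) • b k := by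
      intro k
      conv_lhs => rw [← hσd]
      rw [dephase_mulVec hb, hσdot k]
    have hΛherm : (dephase b ρ).IsHermitian := (dephase_posSemidef hρ.1).1
    have hσherm : σ.IsHermitian := hσ.1.1
    have hmlogΛ : ∀ k, mlog (dephase b ρ) *ᵥ b k = ((Real.log (p k) : ℝ) : ℂ) • b k :=
      fun k => mlog_eigen hΛherm (p k) (hΛ_eig k)
    have hmlogσ : ∀ k, mlog σ *ᵥ b k = ((Real.log (c k) : ℝ) : ℂ) • b k :=
      fun k => mlog_eigen hσherm (c k) (hσ_eig k)
    -- sums equal one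
    have hpsum : ∑ k, p k = 1 := by
      have := hb.trace_eq ρ
      rw [hρ.2] at this
      have h2 : (1 : ℂ) = ∑ k, ((p k : ℝ) : ℂ) := by
        rw [this]; exact Finset.sum_congr rfl fun k _ => hρdot k
      have := congrArg Complex.re h2
      simpa [Complex.re_sum] using this.symm
    have hcsum : ∑ k, c k = 1 := by
      have := hb.trace_eq σ
      rw [hσ.2] at this
      have h2 : (1 : ℂ) = ∑ k, ((c k : ℝ) : ℂ) := by
        rw [this]; exact Finset.sum_congr rfl fun k _ => hσdot k
      have := congrArg Complex.re h2
      simpa [Complex.re_sum] using this.symm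
    have hczero : ∀ k, c k = 0 → p k = 0 := by
      intro k hck
      have : σ *ᵥ b k = 0 := by rw [hσ_eig k, hck]; simp
      have := hs (b k) this
      rw [hp]
      simp [this]
    -- the traces
    have htraceσ : (ρ * mlog σ).trace.re = ∑ k, Real.log (c k) * p k := by
      rw [trace_mul_eig hb ρ (mlog σ) _ hmlogσ]
      rw [Complex.re_sum]
      refine Finset.sum_congr rfl fun k _ => ?_
      rw [hρdot k]
      simp [← Complex.ofReal_mul]
    have htraceΛ : (ρ * mlog (dephase b ρ)).trace.re = ∑ k, Real.log (p k) * p k := by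
      rw [trace_mul_eig hb ρ _ _ hmlogΛ]
      rw [Complex.re_sum]
      refine Finset.sum_congr rfl fun k _ => ?_
      rw [hρdot k]
      simp [← Complex.ofReal_mul]
    -- Gibbs inequality
    have gibbs : ∑ k, Real.log (c k) * p k ≤ ∑ k, Real.log (p k) * p k := by
      have hterm : ∀ k, Real.log (c k) * p k - Real.log (p k) * p k ≤ c k - p k := by
        intro k
        rcases eq_or_lt_of_le (hpnn k) with h0 | hpk
        · rw [← h0]; simpa using hcnn k
        · have hck : 0 < c k := by
            rcases eq_or_lt_of_le (hcnn k) with h0 | h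
            · exfalso; have := hczero k h0.symm; linarith
            · exact h
          have hlog : Real.log (c k) - Real.log (p k) ≤ c k / p k - 1 := by
            rw [← Real.log_div (ne_of_gt hck) (ne_of_gt hpk)]
            exact Real.log_le_sub_one_of_pos (div_pos hck hpk)
          have := mul_le_mul_of_nonneg_right hlog (le_of_lt hpk)
          calc Real.log (c k) * p k - Real.log (p k) * p k
              = (Real.log (c k) - Real.log (p k)) * p k := by ring
            _ ≤ (c k / p k - 1) * p k := this
            _ = c k - p k := by field_simp
      have hsum := Finset.sum_le_sum (fun k (_ : k ∈ Finset.univ) => hterm k)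
      rw [Finset.sum_sub_distrib, Finset.sum_sub_distrib, hpsum, hcsum] at hsum
      linarith
    -- put everything together
    have hsupΛ := dephase_support hb hρ.1
    rw [relEnt, relEnt, if_pos hsupΛ, if_pos hs]
    rw [EReal.coe_le_coe_iff]
    rw [Matrix.mul_sub, Matrix.mul_sub, Matrix.trace_sub, Matrix.trace_sub,
      Complex.sub_re, Complex.sub_re, htraceσ, htraceΛ]
    linarith
  · have h : relEnt ρ σ = ⊤ := by rw [relEnt, if_neg hs]
    rw [h]
    exact le_top

end Aux

/-- `S(ρ‖Λ^Ξ(UρU†)) ≥ S(ρ‖Λ^Ξ(ρ))`; equivalently, among states diagonal in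
the basis `Ξ` the dephased state `Λ^Ξ(ρ)` is closest to `ρ` in relative entropy. -/
theorem dephased_state_closest
    (ρ : Matrix n n ℂ) (hρ : IsDensity ρ)
    (b : n → n → ℂ) (hb : ONB b)
    (U : Matrix n n ℂ) (hU : U ∈ Matrix.unitaryGroup n ℂ) :
    relEnt ρ (dephase b ρ) ≤ relEnt ρ (dephase b (U * ρ * Uᴴ)) ∧
    ∀ σ : Matrix n n ℂ, IsDensity σ → dephase b σ = σ →
      relEnt ρ (dephase b ρ) ≤ relEnt ρ σ := by
  have main := fun σ hσ hσd => relEnt_dephase_le ρ hρ hb σ hσ hσd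
  refine ⟨?_, main⟩
  have hU1 : U * Uᴴ = 1 := by
    have := Matrix.mem_unitaryGroup_iff.mp hU
    rwa [Matrix.star_eq_conjTranspose] at this
  have hpsd : (U * ρ * Uᴴ).PosSemidef := by
    have := hρ.1.conjTranspose_mul_mul_same Uᴴ
    rwa [Matrix.conjTranspose_conjTranspose] at this
  have htr : (U * ρ * Uᴴ).trace = 1 := by
    rw [Matrix.trace_mul_comm, ← Matrix.mul_assoc, mul_eq_one_comm.mp hU1,
      Matrix.one_mul, hρ.2]
  exact main (dephase b (U * ρ * Uᴴ))
    ⟨dephase_posSemidef hpsd, by rw [dephase_trace hb, htr]⟩ (dephase_idem hb _)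

end
end

section
/- For a maximally correlated state ρ = Σ_{ij} ρ_{ij} |ii⟩⟨jj| on H_A ⊗ H_B (with d_A = d_B = d), the B-side measurement-induced disturbance in relative entropy equals S(ρ_B) − S(ρ), i.e. S(ρ ‖ (I ⊗ Λ^{E_B})(ρ)) = S(ρ_B) − S(ρ), where E_B = {|j⟩} is the computational eigenbasis of ρ_B. -/
open Matrix Kronecker BigOperators Finset
open scoped Classical ComplexOrder

noncomputable section

variable {m n q : Type*} [Fintype m] [DecidableEq m] [Fintype n] [DecidableEq n]
  [Fintype q] [DecidableEq q]

set_option linter.unusedSectionVars false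

lemma isHermitian_diagonal_ofReal (f : n → ℝ) :
    (diagonal (fun i => (f i : ℂ))).IsHermitian := by
  ext i j
  rw [conjTranspose_apply, diagonal_apply, diagonal_apply]
  by_cases h : i = j
  · subst h; simp [Complex.conj_ofReal]
  · simp [h, Ne.symm h]

lemma mlog_diagonal (f : n → ℝ) :
    mlog (diagonal (fun i => (f i : ℂ))) = diagonal (fun i => (Real.log (f i) : ℂ)) := by
  have hA := isHermitian_diagonal_ofReal f
  rw [mlog, dif_pos hA]
  set U : Matrix n n ℂ := (hA.eigenvectorUnitary : Matrix n n ℂ) with hU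
  have hUU : U * star U = 1 := Matrix.mem_unitaryGroup_iff.mp hA.eigenvectorUnitary.2
  have hsUU : star U * U = 1 := Matrix.mem_unitaryGroup_iff'.mp hA.eigenvectorUnitary.2
  have hAU : diagonal (fun i => (f i : ℂ)) * U
      = U * diagonal (RCLike.ofReal ∘ hA.eigenvalues) := by
    conv_lhs => rw [hA.spectral_theorem]
    simp only [Unitary.conjStarAlgAut_apply, Unitary.coe_star]
    rw [mul_assoc, hsUU, mul_one]
  have key : ∀ x a, U x a ≠ 0 → hA.eigenvalues a = f x := by
    intro x a h
    have h2 := Matrix.ext_iff.mpr hAU x a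
    rw [diagonal_mul, mul_diagonal, Function.comp_apply] at h2
    have h3 := mul_left_cancel₀ h (h2.symm.trans (mul_comm _ _))
    exact RCLike.ofReal_injective (K := ℂ) h3
  ext x y
  have e1 : ((U * diagonal (fun i => (Real.log (hA.eigenvalues i) : ℂ))) * star U) x y
      = ∑ a, U x a * (Real.log (hA.eigenvalues a) : ℂ) * star (U y a) := by
    rw [mul_apply]
    exact Finset.sum_congr rfl fun a _ => by rw [mul_diagonal, star_apply]
  rw [e1]
  have e2 : ∀ a ∈ Finset.univ, U x a * (Real.log (hA.eigenvalues a) : ℂ) * star (U y a)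
      = (Real.log (f x) : ℂ) * (U x a * star (U y a)) := by
    intro a _
    by_cases h : U x a = 0
    · simp [h]
    · rw [key x a h]; ring
  rw [Finset.sum_congr rfl e2, ← Finset.mul_sum]
  have e3 : ∑ a, U x a * star (U y a) = (1 : Matrix n n ℂ) x y := by
    rw [← hUU, mul_apply]
    exact Finset.sum_congr rfl fun a _ => by rw [star_apply]
  rw [e3, diagonal_apply, one_apply]
  split_ifs with h
  · rw [mul_one]
  · rw [mul_zero]

lemma psd_col_zero {A : Matrix n n ℂ} (hA : A.PosSemidef) {k : n} (h : A k k = 0) (x : n) :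
    A x k = 0 := by
  open scoped MatrixOrder Matrix.Norms.L2Operator in
  obtain ⟨B, rfl⟩ := CStarAlgebra.nonneg_iff_eq_star_mul_self.mp hA.nonneg
  simp only [star_eq_conjTranspose] at h ⊢
  have hk : ∀ a, B a k = 0 := by
    rw [mul_apply] at h
    simp only [conjTranspose_apply] at h
    have h' : ∑ a, (Complex.normSq (B a k) : ℂ) = 0 := by
      rw [← h]
      exact Finset.sum_congr rfl fun a _ => Complex.normSq_eq_conj_mul_self
    have h'' : ∑ a, Complex.normSq (B a k) = 0 := by exact_mod_cast h'
    intro a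
    have := (Finset.sum_eq_zero_iff_of_nonneg
      (fun a _ => Complex.normSq_nonneg (B a k))).mp h'' a (Finset.mem_univ a)
    exact Complex.normSq_eq_zero.mp this
  rw [mul_apply]
  exact Finset.sum_eq_zero fun a _ => by rw [hk a, mul_zero]

lemma kron_proj_stdB (k : n) : ((1 : Matrix m m ℂ) ⊗ₖ proj (stdB k))
    = diagonal (fun x : m × n => if x.2 = k then 1 else 0) := by
  ext ⟨a,b⟩ ⟨c,e⟩
  simp only [kroneckerMap_apply, proj, stdB, vecMulVec_apply, Pi.star_apply, Matrix.one_apply,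
    diagonal_apply, Prod.mk.injEq]
  split_ifs <;> simp_all


/-- for a maximally correlated state `ρ = Σ ρ_{ij}|ii⟩⟨jj|`, the
B-side relative-entropy MID equals `S(ρ_B) − S(ρ)`. -/
theorem mc_state_MID
    (d : ℕ) (ρ : Matrix (Fin d × Fin d) (Fin d × Fin d) ℂ) (hρ : IsDensity ρ)
    (hmc : ∀ i j k l, ρ (i, j) (k, l) = if i = j ∧ k = l then ρ (i, i) (k, k) else 0) :
    relEnt ρ (dephaseB stdB ρ) = ((vN (ptraceA ρ) - vN ρ : ℝ) : EReal) := by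
  classical
  obtain ⟨hpsd, htr⟩ := hρ
  have hherm := hpsd.1
  set p : Fin d → ℝ := fun i => (ρ (i,i) (i,i)).re with hp
  have hdiag : ∀ i : Fin d, ρ (i,i) (i,i) = (p i : ℂ) :=
    fun i => (hherm.coe_re_apply_self (i,i)).symm
  set qr : Fin d × Fin d → ℝ := fun x => if x.1 = x.2 then p x.1 else 0 with hqr
  have hkron := fun k : Fin d => kron_proj_stdB (m := Fin d) k
  have hσ : dephaseB stdB ρ = diagonal (fun x => (qr x : ℂ)) := by
    ext x y
    rw [dephaseB, Matrix.sum_apply]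
    have e : ∀ k ∈ Finset.univ, (((1:Matrix (Fin d) (Fin d) ℂ) ⊗ₖ proj (stdB k)) * ρ *
        ((1:Matrix (Fin d) (Fin d) ℂ) ⊗ₖ proj (stdB k))) x y
        = (if x.2 = k then 1 else 0) * ρ x y * (if y.2 = k then 1 else 0) := by
      intro k _
      rw [hkron, mul_diagonal, diagonal_mul]
    rw [Finset.sum_congr rfl e]
    rcases x with ⟨i,j⟩
    rcases y with ⟨i',j'⟩
    by_cases hjj : j = j'
    · subst hjj
      rw [Finset.sum_eq_single j]
      · simp only [if_pos rfl, one_mul, mul_one]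
        rw [hmc i j i' j, diagonal_apply]
        by_cases h1 : i = j
        · subst h1
          by_cases h2 : i' = i
          · subst h2; simp [hqr, hdiag]
          · have hc1 : ¬(i = i ∧ i' = i) := fun h => h2 h.2
            have hc2 : ((i,i) : Fin d × Fin d) ≠ (i',i) :=
              fun h => h2 (congrArg Prod.fst h).symm
            rw [if_neg hc1, if_neg hc2]
            simp
        · have hc1 : ¬(i = j ∧ i' = j) := fun h => h1 h.1
          rw [if_neg hc1]
          simp [hqr, h1]
      · intro k _ hk
        simp [Ne.symm hk]
      · intro h; exact absurd (Finset.mem_univ j) h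
    · rw [diagonal_apply_ne]
      · apply Finset.sum_eq_zero
        intro k _
        by_cases h1 : j = k
        · subst h1
          rw [if_pos rfl, if_neg (fun h => hjj h.symm), mul_zero]
        · show (if j = k then (1:ℂ) else 0) * _ * _ = 0
          rw [if_neg h1, zero_mul, zero_mul]
      · simp [Prod.ext_iff, hjj]
  have hB : ptraceA ρ = diagonal (fun j : Fin d => (p j : ℂ)) := by
    ext j j'
    show (∑ i, ρ (i, j) (i, j')) = _
    rw [Finset.sum_congr rfl (fun i _ => hmc i j i j')]
    by_cases h : j = j'
    · subst h
      rw [diagonal_apply_eq, Finset.sum_eq_single j]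
      · simp [hdiag]
      · intro k _ hk; simp [hk]
      · intro h; exact absurd (Finset.mem_univ j) h
    · rw [diagonal_apply_ne _ h]
      apply Finset.sum_eq_zero
      intro i _
      split_ifs with h2
      · exact absurd (h2.1.symm.trans h2.2) h
      · rfl
  have hsupp : ∀ v, dephaseB stdB ρ *ᵥ v = 0 → ρ *ᵥ v = 0 := by
    intro v hv
    rw [hσ] at hv
    funext x
    obtain ⟨a, b⟩ := x
    show ∑ y, ρ (a,b) y * v y = 0
    apply Finset.sum_eq_zero
    rintro ⟨k, l⟩ -
    by_cases hkl : k = l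
    · subst hkl
      have hv' := congrFun hv (k,k)
      rw [mulVec_diagonal] at hv'
      simp only [Pi.zero_apply] at hv'
      rcases mul_eq_zero.mp hv' with h0 | h0
      · have hz : ρ (k,k) (k,k) = 0 := by
          rw [hdiag k]
          simpa [hqr] using h0
        rw [psd_col_zero hpsd hz (a,b), zero_mul]
      · rw [h0, mul_zero]
    · rw [hmc a b k l, if_neg (fun h => hkl h.2), zero_mul]
  rw [relEnt, if_pos hsupp, hσ, hB, EReal.coe_eq_coe_iff]
  have hT1 : (ρ * mlog (diagonal (fun x => (qr x : ℂ)))).trace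
      = ∑ i : Fin d, (p i : ℂ) * (Real.log (p i) : ℂ) := by
    rw [mlog_diagonal, trace]
    simp only [diag_apply, mul_diagonal]
    rw [Fintype.sum_prod_type]
    refine Finset.sum_congr rfl fun i _ => ?_
    rw [Finset.sum_eq_single i]
    · rw [hmc i i i i, if_pos ⟨rfl, rfl⟩, hdiag i]
      simp [hqr]
    · intro j _ hj
      rw [hmc i j i j, if_neg (fun h => hj h.1.symm), zero_mul]
    · intro h; exact absurd (Finset.mem_univ i) h
  have hT2 : ((diagonal (fun j : Fin d => (p j : ℂ))) *
      mlog (diagonal (fun j : Fin d => (p j : ℂ)))).trace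
      = ∑ i : Fin d, (p i : ℂ) * (Real.log (p i) : ℂ) := by
    rw [mlog_diagonal, diagonal_mul_diagonal, trace_diagonal]
  rw [mul_sub, trace_sub, Complex.sub_re, vN, vN, hT1, hT2]
  ring


end
end

section
/- Let ρ = Σ_{ij} ρ_{ij} |ii⟩⟨jj| be a maximally correlated state on C^d ⊗ C^d, and let Alice measure in the Fourier basis |ξ_k⟩ = (1/√d) Σ_j e^{−2πi kj/d} |j⟩, k = 0,…,d−1. Then each outcome k occurs with probability 1/d, each steered state ρ_B^{ξ_k} = d·⟨ξ_k|ρ|ξ_k⟩ satisfies S(ρ_B^{ξ_k}) = S(ρ), and Λ^{E_B}(ρ_B^{ξ_k}) = ρ_B, so the average relative-entropy coherence of the steered states equals S(ρ_B) − S(ρ). -/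
open Matrix Kronecker BigOperators Finset
open scoped Classical ComplexOrder

noncomputable section

variable {m n q : Type*} [Fintype m] [DecidableEq m] [Fintype n] [DecidableEq n]
  [Fintype q] [DecidableEq q]

lemma trace_mul_mlog (A : Matrix n n ℂ) (hA : A.IsHermitian) :
    (A * mlog A).trace = ∑ i, ((hA.eigenvalues i : ℂ) * (Real.log (hA.eigenvalues i) : ℂ)) := by
  rw [mlog, dif_pos hA]
  set W := (hA.eigenvectorUnitary : Matrix n n ℂ) with hW
  have hsW : star W * W = 1 := mem_unitaryGroup_iff'.mp hA.eigenvectorUnitary.2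
  have key : A * (W * diagonal (fun i => (Real.log (hA.eigenvalues i) : ℂ)) * star W)
      = W * (diagonal (RCLike.ofReal ∘ hA.eigenvalues) *
          diagonal (fun i => (Real.log (hA.eigenvalues i) : ℂ))) * star W := by
    have h0 : A * (W * diagonal (fun i => (Real.log (hA.eigenvalues i) : ℂ)) * star W)
        = (W * diagonal (RCLike.ofReal ∘ hA.eigenvalues) * star W) *
          (W * diagonal (fun i => (Real.log (hA.eigenvalues i) : ℂ)) * star W) := by
      have hs := hA.spectral_theorem
      simp only [Unitary.conjStarAlgAut_apply, Unitary.coe_star] at hs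
      rw [← hs]
    rw [h0]
    simp only [Matrix.mul_assoc]
    rw [← Matrix.mul_assoc (star W) W, hsW, one_mul]
  rw [key, Matrix.trace_mul_cycle, ← Matrix.mul_assoc, hsW, one_mul, diagonal_mul_diagonal,
    trace_diagonal]
  simp [RCLike.ofReal]

lemma det_smul_one_sub (A : Matrix n n ℂ) (hA : A.IsHermitian) (x : ℂ) :
    det (x • (1 : Matrix n n ℂ) - A) = ∏ i, (x - (hA.eigenvalues i : ℂ)) := by
  set W := (hA.eigenvectorUnitary : Matrix n n ℂ) with hW
  have hsW : star W * W = 1 := mem_unitaryGroup_iff'.mp hA.eigenvectorUnitary.2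
  have hWs : W * star W = 1 := mem_unitaryGroup_iff.mp hA.eigenvectorUnitary.2
  have h0 : x • (1 : Matrix n n ℂ) - A
      = W * (x • (1 : Matrix n n ℂ) - diagonal (RCLike.ofReal ∘ hA.eigenvalues)) * star W := by
    have hs := hA.spectral_theorem
    simp only [Unitary.conjStarAlgAut_apply, Unitary.coe_star] at hs
    rw [Matrix.mul_sub, Matrix.sub_mul, ← hs]
    congr 1
    rw [mul_smul_comm, smul_mul_assoc, mul_one, hWs]
  rw [h0, det_mul, det_mul, mul_comm (det W), mul_assoc, ← det_mul, hWs, det_one, mul_one]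
  rw [smul_one_eq_diagonal, diagonal_sub, det_diagonal]
  simp [RCLike.ofReal]

lemma det_key (V : Matrix n m ℂ) (hV : Vᴴ * V = 1) (A : Matrix m m ℂ) (x : ℂ) (hx : x ≠ 0) :
    x ^ (Fintype.card m) * det (x • (1 : Matrix n n ℂ) - V * A * Vᴴ)
      = x ^ (Fintype.card n) * det (x • (1 : Matrix m m ℂ) - A) := by
  have h1 : x • (1 : Matrix n n ℂ) - V * A * Vᴴ
      = x • ((1 : Matrix n n ℂ) + V * ((-(x⁻¹)) • (A * Vᴴ))) := by
    rw [smul_add]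
    congr 1
    rw [Matrix.mul_smul, smul_smul, mul_neg, mul_inv_cancel₀ hx, neg_smul, one_smul,
      ← Matrix.mul_assoc]
    abel
  have h2 : x • (1 : Matrix m m ℂ) - A
      = x • ((1 : Matrix m m ℂ) + ((-(x⁻¹)) • (A * Vᴴ)) * V) := by
    rw [smul_add]
    congr 1
    rw [Matrix.smul_mul, Matrix.mul_assoc, hV, mul_one, smul_smul, mul_neg,
      mul_inv_cancel₀ hx, neg_smul, one_smul]
    abel
  rw [h1, h2, det_smul, det_smul, det_one_add_mul_comm]
  ring

lemma eigen_multiset (V : Matrix n m ℂ) (hV : Vᴴ * V = 1) (A : Matrix m m ℂ)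
    (hA : A.IsHermitian) (hB : (V * A * Vᴴ).IsHermitian) :
    Multiset.map (fun i => (hB.eigenvalues i : ℂ)) Finset.univ.val
        + Multiset.replicate (Fintype.card m) (0 : ℂ)
      = Multiset.map (fun j => (hA.eigenvalues j : ℂ)) Finset.univ.val
        + Multiset.replicate (Fintype.card n) (0 : ℂ) := by
  set sB : Multiset ℂ := Multiset.map (fun i => (hB.eigenvalues i : ℂ)) Finset.univ.val with hsB
  set sA : Multiset ℂ := Multiset.map (fun j => (hA.eigenvalues j : ℂ)) Finset.univ.val with hsA
  set P : Polynomial ℂ :=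
    (sB.map fun a => Polynomial.X - Polynomial.C a).prod * Polynomial.X ^ (Fintype.card m) with hP
  set Q : Polynomial ℂ :=
    (sA.map fun a => Polynomial.X - Polynomial.C a).prod * Polynomial.X ^ (Fintype.card n) with hQ
  have hmB : ((sB.map fun a => Polynomial.X - Polynomial.C a).prod).Monic :=
    Polynomial.monic_multiset_prod_of_monic _ _ (fun a _ => Polynomial.monic_X_sub_C a)
  have hmA : ((sA.map fun a => Polynomial.X - Polynomial.C a).prod).Monic :=
    Polynomial.monic_multiset_prod_of_monic _ _ (fun a _ => Polynomial.monic_X_sub_C a)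
  have hPQ : P = Q := by
    apply Polynomial.eq_of_infinite_eval_eq
    apply Set.Infinite.mono (s := {x : ℂ | x ≠ 0})
    · intro x hx
      have hx : x ≠ 0 := hx
      have e1 : Polynomial.eval x P = det (x • (1 : Matrix n n ℂ) - V * A * Vᴴ)
          * x ^ (Fintype.card m) := by
        rw [hP, Polynomial.eval_mul, Polynomial.eval_pow, Polynomial.eval_X,
          Polynomial.eval_multiset_prod, det_smul_one_sub _ hB, hsB,
          Multiset.map_map, Multiset.map_map]
        simp only [Function.comp_def, Polynomial.eval_sub, Polynomial.eval_X, Polynomial.eval_C]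
        rw [Finset.prod_eq_multiset_prod]
      have e2 : Polynomial.eval x Q = det (x • (1 : Matrix m m ℂ) - A)
          * x ^ (Fintype.card n) := by
        rw [hQ, Polynomial.eval_mul, Polynomial.eval_pow, Polynomial.eval_X,
          Polynomial.eval_multiset_prod, det_smul_one_sub _ hA, hsA,
          Multiset.map_map, Multiset.map_map]
        simp only [Function.comp_def, Polynomial.eval_sub, Polynomial.eval_X, Polynomial.eval_C]
        rw [Finset.prod_eq_multiset_prod]
      show Polynomial.eval x P = Polynomial.eval x Q
      rw [e1, e2, mul_comm _ (x ^ Fintype.card m), mul_comm _ (x ^ Fintype.card n)]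
      exact det_key V hV A x hx
    · exact Set.Infinite.mono (fun x hx => hx) ((Set.finite_singleton (0:ℂ)).infinite_compl)
  have hroots : P.roots = Q.roots := by rw [hPQ]
  rwa [hP, hQ, Polynomial.roots_mul (mul_ne_zero hmB.ne_zero (pow_ne_zero _ Polynomial.X_ne_zero)),
    Polynomial.roots_mul (mul_ne_zero hmA.ne_zero (pow_ne_zero _ Polynomial.X_ne_zero)),
    Polynomial.roots_multiset_prod_X_sub_C, Polynomial.roots_multiset_prod_X_sub_C,
    Polynomial.roots_pow, Polynomial.roots_X, Multiset.nsmul_singleton,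
    Polynomial.roots_pow, Polynomial.roots_X, Multiset.nsmul_singleton] at hroots

lemma vN_conj_isometry (V : Matrix n m ℂ) (hV : Vᴴ * V = 1) (A : Matrix m m ℂ)
    (hA : A.IsHermitian) : vN (V * A * Vᴴ) = vN A := by
  have hB : (V * A * Vᴴ).IsHermitian := by
    have : Aᴴ = A := hA
    show (V * A * Vᴴ)ᴴ = _
    rw [conjTranspose_mul, conjTranspose_mul, conjTranspose_conjTranspose, this, Matrix.mul_assoc]
  rw [vN, vN, trace_mul_mlog _ hB, trace_mul_mlog _ hA]
  have key := congrArg (fun s : Multiset ℂ => (s.map fun z => z * (Real.log z.re : ℂ)).sum)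
    (eigen_multiset V hV A hA hB)
  simp only [Multiset.map_add, Multiset.sum_add, Multiset.map_replicate, Multiset.map_map,
    Complex.zero_re, Real.log_zero, Complex.ofReal_zero, mul_zero, zero_mul,
    Multiset.sum_replicate, smul_zero, add_zero] at key
  have h1 : ∑ i, ((hB.eigenvalues i : ℂ) * (Real.log (hB.eigenvalues i) : ℂ))
      = ∑ j, ((hA.eigenvalues j : ℂ) * (Real.log (hA.eigenvalues j) : ℂ)) := by
    rw [Finset.sum_eq_multiset_sum, Finset.sum_eq_multiset_sum]
    simpa [Function.comp_def, Complex.ofReal_re] using key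
  rw [h1]

lemma dephase_stdB_eq (M : Matrix n n ℂ) :
    dephase stdB M = Matrix.of fun i j => if i = j then M i i else 0 := by
  ext a b
  rw [show dephase stdB M = ∑ i, proj (stdB i) * M * proj (stdB i) from rfl]
  rw [Matrix.sum_apply]
  simp only [Matrix.mul_apply, proj, stdB, vecMulVec_apply, Matrix.of_apply,
    Pi.star_apply, apply_ite (star : ℂ → ℂ), star_one, star_zero]
  by_cases h : a = b <;>
    simp [ite_mul, mul_ite, Finset.sum_ite_eq, Finset.sum_ite_eq', eq_comm, h]

/-- Fourier-basis steering of a maximally correlated state: each outcome has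
probability `1/d`, the steered states have the entropy of `ρ` and dephase to `ρ_B`, and the
average relative-entropy coherence of the steered states is `S(ρ_B) − S(ρ)`. -/
theorem mc_state_fourier_steering
    (d : ℕ) (hd : 0 < d)
    (ρ : Matrix (Fin d × Fin d) (Fin d × Fin d) ℂ) (hρ : IsDensity ρ)
    (hmc : ∀ i j k l, ρ (i, j) (k, l) = if i = j ∧ k = l then ρ (i, i) (k, k) else 0) :
    (∀ k : Fin d,
      sprob (fbasis d k) ρ = 1 / d ∧
      vN ((d : ℂ) • steer (fbasis d k) ρ) = vN ρ ∧
      dephase stdB ((d : ℂ) • steer (fbasis d k) ρ) = ptraceA ρ) ∧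
    ∑ k : Fin d, sprob (fbasis d k) ρ *
        (vN (dephase stdB ((d : ℂ) • steer (fbasis d k) ρ)) -
          vN ((d : ℂ) • steer (fbasis d k) ρ)) =
      vN (ptraceA ρ) - vN ρ := by
  have hdR : (d : ℝ) ≠ 0 := Nat.cast_ne_zero.mpr hd.ne'
  have hdC : (d : ℂ) ≠ 0 := Nat.cast_ne_zero.mpr hd.ne'
  set r : Matrix (Fin d) (Fin d) ℂ := Matrix.of (fun i k => ρ (i, i) (k, k)) with hr
  have hρH : ρ.IsHermitian := hρ.1.1
  have hrH : r.IsHermitian := by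
    ext i j
    show star (r j i) = r i j
    show star (ρ (j, j) (i, i)) = ρ (i, i) (j, j)
    rw [← conjTranspose_apply, hρH]
  -- trace of r
  have htr : r.trace = 1 := by
    rw [← hρ.2, Matrix.trace, Matrix.trace, Fintype.sum_prod_type]
    refine Finset.sum_congr rfl fun i _ => ?_
    rw [Finset.sum_eq_single i (fun j _ hj => by simp [Matrix.diag_apply, hmc, Ne.symm hj])
      (by simp)]
    rfl
  -- the isometry embedding
  set V : Matrix (Fin d × Fin d) (Fin d) ℂ :=
    Matrix.of (fun p c => if p = (c, c) then 1 else 0) with hV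
  have hVV : Vᴴ * V = 1 := by
    ext c c'
    simp only [Matrix.mul_apply, conjTranspose_apply, hV, Matrix.of_apply,
      apply_ite (star : ℂ → ℂ), star_one, star_zero, ite_mul, one_mul, zero_mul,
      Matrix.one_apply, Prod.mk.injEq, ite_and]
    simp [Finset.sum_ite_eq, Finset.sum_ite_eq', eq_comm]
  have hρ_eq : ρ = V * r * Vᴴ := by
    ext p q
    obtain ⟨i, j⟩ := p
    obtain ⟨k, l⟩ := q
    rw [hmc]
    simp only [Matrix.mul_apply, conjTranspose_apply, hV, Matrix.of_apply,
      apply_ite (star : ℂ → ℂ), star_one, star_zero, ite_mul, mul_ite, one_mul, zero_mul,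
      mul_one, mul_zero, Prod.mk.injEq, ite_and, Finset.sum_ite_eq, Finset.sum_ite_eq',
      Finset.mem_univ, if_true, Finset.sum_ite_irrel, Finset.sum_const_zero]
    by_cases hij : i = j <;> by_cases hkl : k = l <;> simp [hij, hkl, hr, eq_comm]
  have hvNρ : vN ρ = vN r := by rw [hρ_eq]; exact vN_conj_isometry V hVV r hrH

  have hpt : ptraceA ρ = Matrix.of fun j j' => if j = j' then r j j else 0 := by
    ext j j'
    show (∑ i, ρ (i, j) (i, j')) = _
    by_cases h : j = j'
    · subst h
      rw [Finset.sum_eq_single j (fun i _ hi => by simp [hmc, hi]) (by simp)]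
      rw [hmc]
      simp [hr]
    · rw [Finset.sum_eq_zero fun i _ => by
        rw [hmc, if_neg]
        rintro ⟨rfl, rfl⟩
        exact h rfl]
      simp [h]
  have hc : (d : ℂ) * ((1 / Real.sqrt d : ℝ) : ℂ) * ((1 / Real.sqrt d : ℝ) : ℂ) = 1 := by
    rw [mul_assoc, ← Complex.ofReal_mul]
    rw [show (1 / Real.sqrt d) * (1 / Real.sqrt d) = 1 / (d : ℝ) from by
      rw [div_mul_div_comm, one_mul, Real.mul_self_sqrt (Nat.cast_nonneg d)]]
    push_cast
    field_simp
  have key : ∀ k : Fin d,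
      sprob (fbasis d k) ρ = 1 / d ∧
      vN ((d : ℂ) • steer (fbasis d k) ρ) = vN ρ ∧
      dephase stdB ((d : ℂ) • steer (fbasis d k) ρ) = ptraceA ρ := by
    intro k
    set u : Fin d → ℂ :=
      fun j => Complex.exp (2 * (Real.pi : ℂ) * Complex.I * ((k : ℕ) : ℂ) * ((j : ℕ) : ℂ) / d)
      with hu
    have hconj : ∀ j, (starRingEnd ℂ) (u j)
        = Complex.exp (-(2 * (Real.pi : ℂ) * Complex.I * ((k : ℕ) : ℂ) * ((j : ℕ) : ℂ)) / d) := by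
      intro j
      rw [hu, ← Complex.exp_conj]
      rw [map_div₀, Complex.conj_natCast]
      congr 1
      simp only [_root_.map_mul, Complex.conj_I, Complex.conj_ofReal, Complex.conj_natCast,
        map_ofNat]
      ring
    have hfb : ∀ j, fbasis d k j = ((1 / Real.sqrt d : ℝ) : ℂ) * (starRingEnd ℂ) (u j) := by
      intro j
      rw [hconj, fbasis]
      push_cast
      ring
    have hu1 : ∀ j, (starRingEnd ℂ) (u j) * u j = 1 := by
      intro j
      rw [hconj, hu, ← Complex.exp_add, neg_div, neg_add_cancel, Complex.exp_zero]
    have hsteer : ∀ j j', steer (fbasis d k) ρ j j'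
        = star (fbasis d k j) * r j j' * fbasis d k j' := by
      intro j j'
      show (∑ i, ∑ i', star (fbasis d k i) * ρ (i, j) (i', j') * fbasis d k i') = _
      rw [Finset.sum_eq_single j (fun i _ hi => Finset.sum_eq_zero fun i' _ => by
          simp [hmc, hi]) (by simp),
        Finset.sum_eq_single j' (fun i' _ hi' => by simp [hmc, hi']) (by simp)]
      rw [hmc]
      simp [hr]
    have hscal : ∀ j j', (d : ℂ) * (star (fbasis d k j) * r j j' * fbasis d k j')
        = u j * r j j' * (starRingEnd ℂ) (u j') := by
      intro j j'
      rw [hfb j, hfb j']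
      simp only [Complex.star_def, _root_.map_mul, Complex.conj_conj, Complex.conj_ofReal]
      linear_combination (u j * r j j' * (starRingEnd ℂ) (u j')) * hc
    have hMdiag : ∀ j, ((d : ℂ) • steer (fbasis d k) ρ) j j = r j j := by
      intro j
      rw [Matrix.smul_apply, smul_eq_mul, hsteer, hscal]
      linear_combination r j j * hu1 j
    refine ⟨?_, ?_, ?_⟩
    · -- probability
      have htrs : (steer (fbasis d k) ρ).trace = ((d : ℂ))⁻¹ := by
        rw [Matrix.trace]
        calc ∑ j, (steer (fbasis d k) ρ).diag j
            = ∑ j, ((d : ℂ))⁻¹ * ((d : ℂ) * (star (fbasis d k j) * r j j * fbasis d k j)) := by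
              refine Finset.sum_congr rfl fun j _ => ?_
              rw [Matrix.diag_apply, hsteer]
              field_simp
          _ = ∑ j, ((d : ℂ))⁻¹ * r j j := by
              refine Finset.sum_congr rfl fun j _ => ?_
              rw [hscal]
              congr 1
              linear_combination r j j * hu1 j
          _ = ((d : ℂ))⁻¹ * r.trace := by rw [Matrix.trace, Finset.mul_sum]; rfl
          _ = ((d : ℂ))⁻¹ := by rw [htr, mul_one]
      rw [sprob, htrs, show ((d : ℂ))⁻¹ = (((d : ℝ))⁻¹ : ℝ) by push_cast; ring,
        Complex.ofReal_re, inv_eq_one_div]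
    · -- entropy
      have hUU : (diagonal u)ᴴ * diagonal u = 1 := by
        rw [diagonal_conjTranspose, diagonal_mul_diagonal]
        ext i j
        rcases eq_or_ne i j with h | h
        · subst h
          simp [Matrix.diagonal_apply_eq, Matrix.one_apply_eq, Complex.star_def, hu1 i]
        · simp [Matrix.diagonal_apply_ne _ h, Matrix.one_apply_ne h]
      have hster : (d : ℂ) • steer (fbasis d k) ρ = diagonal u * r * (diagonal u)ᴴ := by
        ext j j'
        rw [Matrix.smul_apply, smul_eq_mul, hsteer, hscal, diagonal_conjTranspose]
        simp [Matrix.mul_apply, Matrix.diagonal_apply, ite_mul, mul_ite,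
          Finset.sum_ite_eq, Finset.sum_ite_eq', Complex.star_def, mul_assoc]
      rw [hster, vN_conj_isometry (diagonal u) hUU r hrH, hvNρ]
    · -- dephasing
      rw [dephase_stdB_eq, hpt]
      ext j j'
      by_cases h : j = j' <;> simp [h, hMdiag]
  refine ⟨key, ?_⟩
  have hsum : ∀ k : Fin d, sprob (fbasis d k) ρ *
      (vN (dephase stdB ((d : ℂ) • steer (fbasis d k) ρ)) -
        vN ((d : ℂ) • steer (fbasis d k) ρ))
      = (1 / (d : ℝ)) * (vN (ptraceA ρ) - vN ρ) := fun k => by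
    rw [(key k).1, (key k).2.2, (key k).2.1]
  rw [Finset.sum_congr rfl fun k _ => hsum k, Finset.sum_const, Finset.card_univ,
    Fintype.card_fin, nsmul_eq_mul]
  field_simp


end
end
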